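/- There exists a constant Δ₀ such that the following holds. Let G=(V,E) be a finite simple graph with maximum degree Δ ≥ Δ₀ and minimum degree δ ≥ (ln Δ)^8, and let C ⊆ V be a set of vertices such that every v ∈ C has at least d(v)/(2·ln³Δ) and at most 2·d(v)/ln³Δ neighbours in C, where d(v) is the degree of v in G. Then there exists a set E' of edges of G, each with both endpoints in C, such that for every v ∈ C the number of edges of E' incident with v satisfies 1 ≤ d_{E'}(v) ≤ d(v)/ln⁶Δ. -/

import Mathlib

/-- There exists `Δ₀` such that: if `G` has maximum degree `Δ ≥ Δ₀` and minimum degree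
`δ ≥ (ln Δ)^8`, and `C` is a set of vertices such that every `v ∈ C` has at least
`d(v)/(2 ln³Δ)` and at most `2 d(v)/ln³Δ` neighbours in `C`, then there is a set `E'` of
edges of `G`, each with both endpoints in `C`, such that every `v ∈ C` is incident with at
least one and at most `d(v)/ln⁶Δ` edges of `E'`. -/
theorem exists_sparse_spanning_edge_set :
    ∃ Δ₀ : ℕ, ∀ (V : Type*) [Fintype V] (G : SimpleGraph V) [DecidableRel G.Adj],
      Δ₀ ≤ G.maxDegree →
      (Real.log G.maxDegree) ^ 8 ≤ (G.minDegree : ℝ) →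
      ∀ C : Set V,
        (∀ v ∈ C,
          (G.degree v : ℝ) / (2 * (Real.log G.maxDegree) ^ 3) ≤
            ({u : V | G.Adj v u ∧ u ∈ C}.ncard : ℝ) ∧
          ({u : V | G.Adj v u ∧ u ∈ C}.ncard : ℝ) ≤
            2 * (G.degree v : ℝ) / (Real.log G.maxDegree) ^ 3) →
        ∃ E' : Set (Sym2 V), E' ⊆ G.edgeSet ∧ (∀ e ∈ E', ∀ v ∈ e, v ∈ C) ∧
          ∀ v ∈ C,
            1 ≤ {e ∈ E' | v ∈ e}.ncard ∧
            ({e ∈ E' | v ∈ e}.ncard : ℝ) ≤ (G.degree v : ℝ) / (Real.log G.maxDegree) ^ 6 := by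
  classical
  refine ⟨10 ^ 9, ?_⟩
  intro V _ G _ hΔ hδ C hC
  set L : ℝ := Real.log G.maxDegree with hLdef
  have hΔ1 : (10 ^ 9 : ℝ) ≤ (G.maxDegree : ℝ) := by exact_mod_cast hΔ
  have hΔpos : (0 : ℝ) < (G.maxDegree : ℝ) := by linarith
  have hL4 : (4 : ℝ) ≤ L := by
    rw [hLdef, Real.le_log_iff_exp_le hΔpos]
    have h1 : Real.exp 1 < 2.7182818286 := Real.exp_one_lt_d9
    have h2 : Real.exp 4 = Real.exp 1 ^ 4 := by
      rw [← Real.exp_nat_mul]; norm_num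
    have h0 : Real.exp 1 < 3 := by linarith
    have e2 : Real.exp 1 ^ 2 < 9 := by nlinarith [Real.exp_pos 1]
    have h3 : Real.exp 4 < 81 := by
      rw [h2]
      nlinarith [pow_pos (Real.exp_pos 1) 2]
    linarith
  have hL0 : (0 : ℝ) < L := by linarith
  have hdeg : ∀ v : V, L ^ 8 ≤ (G.degree v : ℝ) := fun v =>
    le_trans hδ (by exact_mod_cast G.minDegree_le_degree v)
  -- capacities
  set c : V → ℕ := fun u => ⌊(G.degree u : ℝ) / (2 * L ^ 6)⌋₊ with hcdef
  have hc_up : ∀ u : V, (c u : ℝ) ≤ (G.degree u : ℝ) / (2 * L ^ 6) := fun u =>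
    Nat.floor_le (by positivity)
  have h16 : 16 * L ^ 6 ≤ L ^ 8 := by
    have hL2 : (16 : ℝ) ≤ L ^ 2 := by nlinarith
    calc 16 * L ^ 6 ≤ L ^ 2 * L ^ 6 := by nlinarith [pow_pos hL0 6]
      _ = L ^ 8 := by ring
  have hc_low : ∀ u : V, (G.degree u : ℝ) / (4 * L ^ 6) ≤ (c u : ℝ) := by
    intro u
    have h1 : (G.degree u : ℝ) / (2 * L ^ 6) - 1 < (c u : ℝ) := Nat.sub_one_lt_floor _
    have h2 := hdeg u
    have hL6 : (0 : ℝ) < L ^ 6 := by positivity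
    rw [div_le_iff₀ (by positivity : (0 : ℝ) < 4 * L ^ 6)]
    rw [sub_lt_iff_lt_add, div_lt_iff₀ (by positivity : (0 : ℝ) < 2 * L ^ 6)] at h1
    nlinarith [(Nat.cast_nonneg (c u) : (0:ℝ) ≤ (c u : ℝ))]
  -- neighbourhoods in C
  set nb : V → Finset V := fun v => Finset.univ.filter (fun u => G.Adj v u ∧ u ∈ C)
    with hnbdef
  have hnb_eq : ∀ v : V, ({u : V | G.Adj v u ∧ u ∈ C}).ncard = (nb v).card := by
    intro v
    rw [← Set.ncard_coe_finset]
    congr 1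
    ext u
    simp [hnbdef]
  have hnbC : ∀ v u : V, u ∈ nb v → G.Adj v u ∧ u ∈ C := by
    intro v u hu
    simpa [hnbdef] using hu
  have hCn : ∀ v ∈ C, (G.degree v : ℝ) / (2 * L ^ 3) ≤ ((nb v).card : ℝ) ∧
      ((nb v).card : ℝ) ≤ 2 * (G.degree v : ℝ) / L ^ 3 := by
    intro v hv
    have := hC v hv
    rw [hnb_eq v] at this
    exact this
  -- the bipartite "pick" relation with capacities
  set r : ↥C → Finset (V × ℕ) :=
    fun v => (nb v.1).biUnion (fun u => ({u} : Finset V) ×ˢ Finset.range (c u)) with hrdef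
  have hall : ∀ s : Finset ↥C, s.card ≤ (s.biUnion r).card := by
    intro s
    set N : Finset V := s.biUnion (fun v => nb v.1) with hN
    have hsplit : s.biUnion r
        = N.biUnion (fun u => ({u} : Finset V) ×ˢ Finset.range (c u)) := by
      rw [hN, Finset.biUnion_biUnion]
    have hcard : (s.biUnion r).card = ∑ u ∈ N, c u := by
      rw [hsplit, Finset.card_biUnion]
      · refine Finset.sum_congr rfl fun u _ => ?_
        simp
      · intro a _ b _ hab
        simp only [Finset.disjoint_left]
        rintro ⟨x, i⟩ hx hy
        simp only [Finset.mem_product, Finset.mem_singleton] at hx hy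
        exact hab (hx.1 ▸ hy.1 ▸ rfl)
    -- double counting
    have key : ∑ v ∈ s, (nb v.1).card ≤ ∑ u ∈ N, (nb u).card := by
      rw [← Finset.card_sigma, ← Finset.card_sigma]
      apply Finset.card_le_card_of_injOn (fun p => ⟨p.2, p.1.1⟩)
      · rintro ⟨v, u⟩ hp
        rw [Finset.mem_coe, Finset.mem_sigma] at hp ⊢
        obtain ⟨hv, hu⟩ := hp
        have h := hnbC _ _ hu
        refine ⟨Finset.mem_biUnion.mpr ⟨v, hv, hu⟩, ?_⟩
        simp only [hnbdef, Finset.mem_filter, Finset.mem_univ, true_and]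
        exact ⟨h.1.symm, v.2⟩
      · rintro ⟨v, u⟩ h1 ⟨v', u'⟩ h2 heq
        simp only [Sigma.mk.inj_iff, heq_iff_eq] at heq
        obtain ⟨h3, h4⟩ := heq
        subst h3
        apply Sigma.ext
        · exact Subtype.ext h4
        · exact heq_of_eq rfl
    -- collect real inequalities
    have A1 : ∀ v : ↥C, L ^ 5 / 2 ≤ ((nb v.1).card : ℝ) := by
      intro v
      have h := (hCn v.1 v.2).1
      have hd := hdeg v.1
      have : L ^ 5 / 2 ≤ (G.degree v.1 : ℝ) / (2 * L ^ 3) := by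
        rw [div_le_div_iff₀ (by norm_num) (by positivity)]
        nlinarith [pow_pos hL0 3, pow_pos hL0 5]
      linarith
    have A2 : ∀ u ∈ N, ((nb u).card : ℝ) ≤ 8 * L ^ 3 * (c u : ℝ) := by
      intro u hu
      obtain ⟨v, _, hv⟩ := Finset.mem_biUnion.mp hu
      have huC : u ∈ C := (hnbC _ _ hv).2
      have h := (hCn u huC).2
      have h2 := hc_low u
      rw [div_le_iff₀ (by positivity : (0 : ℝ) < 4 * L ^ 6)] at h2
      rw [le_div_iff₀ (by positivity : (0 : ℝ) < L ^ 3)] at h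
      nlinarith [pow_pos hL0 3, pow_pos hL0 6, (Nat.cast_nonneg (c u) : (0:ℝ) ≤ (c u : ℝ)),
        (Nat.cast_nonneg (G.degree u) : (0:ℝ) ≤ (G.degree u : ℝ))]
    have S1 : (s.card : ℝ) * (L ^ 5 / 2) ≤ ∑ v ∈ s, ((nb v.1).card : ℝ) := by
      have := Finset.card_nsmul_le_sum s (fun v => ((nb v.1).card : ℝ)) (L ^ 5 / 2)
        (fun v _ => A1 v)
      simpa [nsmul_eq_mul] using this
    have S2 : (∑ v ∈ s, ((nb v.1).card : ℝ)) ≤ ∑ u ∈ N, ((nb u).card : ℝ) := by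
      exact_mod_cast key
    have S3 : (∑ u ∈ N, ((nb u).card : ℝ)) ≤ 8 * L ^ 3 * ∑ u ∈ N, (c u : ℝ) := by
      rw [Finset.mul_sum]
      exact Finset.sum_le_sum A2
    have hfinal : (s.card : ℝ) ≤ ∑ u ∈ N, (c u : ℝ) := by
      have hsum0 : (0 : ℝ) ≤ ∑ u ∈ N, (c u : ℝ) :=
        Finset.sum_nonneg fun u _ => Nat.cast_nonneg _
      by_contra hcon
      push_neg at hcon
      have h3 : (0 : ℝ) < 8 * L ^ 3 := by positivity
      have h5 : 8 * L ^ 3 * (∑ u ∈ N, (c u : ℝ)) < 8 * L ^ 3 * (s.card : ℝ) :=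
        mul_lt_mul_of_pos_left hcon h3
      have h6 : (s.card : ℝ) * (L ^ 5 / 2) < 8 * L ^ 3 * (s.card : ℝ) := by linarith
      have hL2 : (16 : ℝ) ≤ L ^ 2 := by nlinarith
      have hprod : (0 : ℝ) ≤ (s.card : ℝ) * L ^ 3 * (L ^ 2 - 16) :=
        mul_nonneg (mul_nonneg (Nat.cast_nonneg s.card) (le_of_lt (pow_pos hL0 3)))
          (by linarith)
      nlinarith [hprod]
    rw [hcard]
    exact_mod_cast hfinal.trans (le_of_eq (Nat.cast_sum _ _).symm)
  obtain ⟨f, finj, hf⟩ := (Finset.all_card_le_biUnion_card_iff_exists_injective r).mp hall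
  have hf1 : ∀ v : ↥C, (f v).1 ∈ nb v.1 ∧ (f v).2 < c (f v).1 := by
    intro v
    obtain ⟨u, hu, hmem⟩ := Finset.mem_biUnion.mp (hf v)
    rw [Finset.mem_product, Finset.mem_singleton, Finset.mem_range] at hmem
    obtain ⟨h1, h2⟩ := hmem
    rw [h1]
    exact ⟨hu, h2⟩
  refine ⟨Set.range (fun v : ↥C => s(v.1, (f v).1)), ?_, ?_, ?_⟩
  · rintro e ⟨v, rfl⟩
    exact (hnbC _ _ (hf1 v).1).1
  · rintro e ⟨v, rfl⟩ w hw
    rw [Sym2.mem_iff] at hw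
    rcases hw with h | h
    · exact h ▸ v.2
    · exact h ▸ (hnbC _ _ (hf1 v).1).2
  · intro v hv
    set vc : ↥C := ⟨v, hv⟩ with hvc
    constructor
    · have hne : {e ∈ Set.range (fun v : ↥C => s(v.1, (f v).1)) | v ∈ e}.Nonempty :=
        ⟨s(v, (f vc).1), ⟨vc, rfl⟩, Sym2.mem_mk_left _ _⟩
      exact (Set.ncard_pos (Set.toFinite _)).mpr hne
    · -- upper bound
      have hsub : {e ∈ Set.range (fun w : ↥C => s(w.1, (f w).1)) | v ∈ e} ⊆
          insert s(v, (f vc).1) ((fun w : ↥C => s(w.1, v)) '' {w : ↥C | (f w).1 = v}) := by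
        rintro e ⟨⟨w, rfl⟩, hve⟩
        rw [Sym2.mem_iff] at hve
        rcases hve with h | h
        · have hw : w = vc := Subtype.ext h.symm
          subst hw
          exact Set.mem_insert _ _
        · refine Set.mem_insert_of_mem _ ⟨w, h.symm, ?_⟩
          show s(↑w, v) = s(↑w, (f w).1)
          rw [h]
      have h4 : {w : ↥C | (f w).1 = v}.ncard ≤ c v := by
        have hmaps : ∀ w ∈ {w : ↥C | (f w).1 = v}, (f w).2 ∈ Set.Iio (c v) := by
          intro w hw
          have hw' : (f w).1 = v := hw
          have := (hf1 w).2
          rw [hw'] at this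
          exact this
        have hinj : Set.InjOn (fun w : ↥C => (f w).2) {w : ↥C | (f w).1 = v} := by
          intro w hw w' hw' heq
          simp only [Set.mem_setOf_eq] at hw hw'
          apply finj
          exact Prod.ext (hw.trans hw'.symm) heq
        have hle := Set.ncard_le_ncard_of_injOn (fun w : ↥C => (f w).2) hmaps hinj
          (Set.toFinite _)
        have hIio : (Set.Iio (c v)).ncard = c v := by
          rw [← Finset.coe_Iio, Set.ncard_coe_finset, Nat.card_Iio]
        rwa [hIio] at hle
      have h5 : {e ∈ Set.range (fun w : ↥C => s(w.1, (f w).1)) | v ∈ e}.ncard ≤ 1 + c v := by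
        calc {e ∈ Set.range (fun w : ↥C => s(w.1, (f w).1)) | v ∈ e}.ncard
            ≤ (insert s(v, (f vc).1)
                ((fun w : ↥C => s(w.1, v)) '' {w : ↥C | (f w).1 = v})).ncard :=
              Set.ncard_le_ncard hsub (Set.toFinite _)
          _ ≤ ((fun w : ↥C => s(w.1, v)) '' {w : ↥C | (f w).1 = v}).ncard + 1 :=
              Set.ncard_insert_le _ _
          _ ≤ {w : ↥C | (f w).1 = v}.ncard + 1 := by
              have := Set.ncard_image_le (f := fun w : ↥C => s(w.1, v))
                (s := {w : ↥C | (f w).1 = v}) (Set.toFinite _)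
              omega
          _ ≤ 1 + c v := by omega
      have hd := hdeg v
      have hcu := hc_up v
      have hL6 : (0 : ℝ) < L ^ 6 := by positivity
      have hcast : ({e ∈ Set.range (fun w : ↥C => s(w.1, (f w).1)) | v ∈ e}.ncard : ℝ)
          ≤ 1 + (c v : ℝ) := by exact_mod_cast h5
      have hstep : 1 + (c v : ℝ) ≤ (G.degree v : ℝ) / L ^ 6 := by
        rw [le_div_iff₀ hL6]
        rw [le_div_iff₀ (by positivity : (0 : ℝ) < 2 * L ^ 6)] at hcu
        nlinarith [(Nat.cast_nonneg (c v) : (0:ℝ) ≤ (c v : ℝ))]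
      linarith
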